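/- arXiv:1403.5099 — 5 statements merged into one kernel-verified Lean document; each statement's English description precedes it below -/
import Mathlib

section
/- A real square matrix A is a P-matrix (all principal minors positive) if and only if every real eigenvalue of A and of every principal submatrix of A is positive. -/
open Matrix BigOperators

/-- The principal minor of `A` indexed by the finset `s`. -/
noncomputable def principalMinor {n : ℕ} (A : Matrix (Fin n) (Fin n) ℝ) (s : Finset (Fin n)) : ℝ :=
  (A.submatrix (fun i : {x // x ∈ s} => (i : Fin n)) (fun j : {x // x ∈ s} => (j : Fin n))).det

/-- `A` is a P-matrix: all principal minors are positive. -/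
def IsPMatrix {n : ℕ} (A : Matrix (Fin n) (Fin n) ℝ) : Prop :=
  ∀ s : Finset (Fin n), s.Nonempty → 0 < principalMinor A s

/-- `A` is a Q-matrix: for each `k` with `1 ≤ k ≤ n`, the sum of all `k × k`
principal minors of `A` is positive. -/
def IsQMatrix {n : ℕ} (A : Matrix (Fin n) (Fin n) ℝ) : Prop :=
  ∀ k : ℕ, 1 ≤ k → k ≤ n →
    0 < ∑ s ∈ Finset.univ.filter (fun s : Finset (Fin n) => s.card = k), principalMinor A s

section Aux

variable {m : Type*} [Fintype m] [DecidableEq m]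

/-- Determinant of the matrix whose rows on `S` agree with `B` and whose rows off `S` are
standard basis vectors equals the principal minor of `B` indexed by `S`. -/
lemma det_piecewise_single (B : Matrix m m ℝ) (S : Finset m) :
    Matrix.det (S.piecewise B (fun i => (Pi.single i 1 : m → ℝ)) : Matrix m m ℝ) =
      (B.submatrix (Subtype.val : {x // x ∈ S} → m) Subtype.val).det := by
  classical
  set M0 : Matrix m m ℝ := S.piecewise B (fun i => (Pi.single i 1 : m → ℝ))
  let e : {x // x ∈ S} ⊕ {x // x ∉ S} ≃ m := Equiv.sumCompl (· ∈ S)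
  have h1 : M0.submatrix e e =
      Matrix.fromBlocks (B.submatrix Subtype.val Subtype.val)
        (B.submatrix Subtype.val Subtype.val) 0 1 := by
    ext i j
    cases i with
    | inl a =>
      have ha := a.2
      cases j with
      | inl b => simp [M0, e, Matrix.submatrix, Finset.piecewise, ha]
      | inr b => simp [M0, e, Matrix.submatrix, Finset.piecewise, ha]
    | inr a =>
      have ha := a.2
      cases j with
      | inl b =>
        have hba : (b : m) ≠ (a : m) := fun h => ha (h ▸ b.2)
        simp [M0, e, Matrix.submatrix, Finset.piecewise, ha, Pi.single_apply, hba]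
      | inr b =>
        simp [M0, e, Matrix.submatrix, Finset.piecewise, ha, Pi.single_apply,
          Matrix.one_apply, eq_comm, Subtype.ext_iff]
  calc M0.det = (M0.submatrix e e).det := (Matrix.det_submatrix_equiv_self e M0).symm
    _ = _ := by rw [h1, Matrix.det_fromBlocks_zero₂₁, Matrix.det_one, mul_one]

/-- If all principal minors of `B` are positive, then `det (B + t • 1) > 0` for all `t ≥ 0`. -/
lemma det_add_smul_one_pos [Nonempty m] (B : Matrix m m ℝ)
    (h : ∀ T : Finset m, T.Nonempty →
      0 < (B.submatrix (Subtype.val : {x // x ∈ T} → m) Subtype.val).det)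
    {t : ℝ} (ht : 0 ≤ t) : 0 < (B + t • 1).det := by
  classical
  have hrows : (B + t • (1 : Matrix m m ℝ)) =
      (fun i => B i) + (fun i => t • (Pi.single i 1 : m → ℝ)) := by
    ext i j
    simp [Matrix.one_apply, Pi.single_apply, eq_comm]
  have hdet : (B + t • (1 : Matrix m m ℝ)).det =
      ∑ S : Finset m, (Matrix.detRowAlternating
        (S.piecewise (fun i => B i) (fun i => t • (Pi.single i 1 : m → ℝ)))) := by
    show Matrix.detRowAlternating _ = _
    rw [hrows]
    exact (Matrix.detRowAlternating (R := ℝ) (n := m)).toMultilinearMap.map_add_univ _ _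
  have hterm : ∀ S : Finset m,
      Matrix.detRowAlternating
        (S.piecewise (fun i => B i) (fun i => t • (Pi.single i 1 : m → ℝ)))
        = t ^ (Sᶜ.card) * Matrix.det
            (S.piecewise B (fun i => (Pi.single i 1 : m → ℝ)) : Matrix m m ℝ) := by
    intro S
    have hpw : S.piecewise (fun i => B i) (fun i => t • (Pi.single i 1 : m → ℝ)) =
        Sᶜ.piecewise
          (fun i => t • (S.piecewise B (fun i => (Pi.single i 1 : m → ℝ)) : Matrix m m ℝ) i)
          (S.piecewise B (fun i => (Pi.single i 1 : m → ℝ))) := by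
      ext i j
      by_cases hi : i ∈ S <;>
        simp [Finset.piecewise, hi]
    rw [hpw]
    have := (Matrix.detRowAlternating (R := ℝ) (n := m)).toMultilinearMap.map_piecewise_smul
      (fun _ => t) (S.piecewise B (fun i => (Pi.single i 1 : m → ℝ))) Sᶜ
    simp [Finset.prod_const, smul_eq_mul] at this
    exact this
  rw [hdet]
  apply Finset.sum_pos'
  · intro S _
    rw [hterm S, det_piecewise_single]
    rcases S.eq_empty_or_nonempty with rfl | hS
    · have : IsEmpty {x // x ∈ (∅ : Finset m)} := ⟨fun x => Finset.notMem_empty _ x.2⟩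
      rw [Matrix.det_isEmpty]
      positivity
    · have := h S hS
      positivity
  · refine ⟨Finset.univ, Finset.mem_univ _, ?_⟩
    rw [hterm, det_piecewise_single]
    simp only [Finset.compl_univ, Finset.card_empty, pow_zero, one_mul]
    exact h Finset.univ Finset.univ_nonempty

end Aux

/-- A principal minor of a principal submatrix of `A` is a principal minor of `A`. -/
lemma submatrix_minor_det {n : ℕ} (A : Matrix (Fin n) (Fin n) ℝ) (s : Finset (Fin n))
    (T : Finset {x // x ∈ s}) :
    ((A.submatrix (fun i : {x // x ∈ s} => (i : Fin n))
        (fun j : {x // x ∈ s} => (j : Fin n))).submatrix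
      (Subtype.val : {x // x ∈ T} → {x // x ∈ s}) Subtype.val).det
    = principalMinor A (T.image Subtype.val) := by
  classical
  have hinj : Function.Injective
      (fun x : {x // x ∈ T} => (⟨x.1.1, Finset.mem_image_of_mem _ x.2⟩ :
        {y // y ∈ T.image Subtype.val})) := by
    intro x y hxy
    have h := congrArg Subtype.val hxy
    exact Subtype.ext (Subtype.ext h)
  have hsurj : Function.Surjective
      (fun x : {x // x ∈ T} => (⟨x.1.1, Finset.mem_image_of_mem _ x.2⟩ :
        {y // y ∈ T.image Subtype.val})) := by
    rintro ⟨y, hy⟩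
    obtain ⟨x, hx, hxy⟩ := Finset.mem_image.mp hy
    exact ⟨⟨x, hx⟩, Subtype.ext hxy⟩
  let e := Equiv.ofBijective _ ⟨hinj, hsurj⟩
  rw [show ((A.submatrix (fun i : {x // x ∈ s} => (i : Fin n))
        (fun j : {x // x ∈ s} => (j : Fin n))).submatrix
      (Subtype.val : {x // x ∈ T} → {x // x ∈ s}) Subtype.val)
      = (A.submatrix (fun i : {x // x ∈ T.image Subtype.val} => (i : Fin n))
        (fun j : {x // x ∈ T.image Subtype.val} => (j : Fin n))).submatrix e e from rfl]
  exact Matrix.det_submatrix_equiv_self e _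

/-- A real square matrix is a P-matrix iff every real eigenvalue of `A` and of
every principal submatrix of `A` is positive. -/
theorem pMatrix_iff_real_eigenvalues_pos {n : ℕ} (A : Matrix (Fin n) (Fin n) ℝ) :
    IsPMatrix A ↔
      ∀ s : Finset (Fin n), s.Nonempty →
        ∀ μ : ℝ, ∀ v : {x // x ∈ s} → ℝ, v ≠ 0 →
          (A.submatrix (fun i : {x // x ∈ s} => (i : Fin n))
              (fun j : {x // x ∈ s} => (j : Fin n))).mulVec v = μ • v →
          0 < μ := by
  classical
  constructor
  · intro hP s hs μ v hv heig
    by_contra hμ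
    push_neg at hμ
    haveI : Nonempty {x // x ∈ s} := Finset.nonempty_coe_sort.mpr hs
    set B := A.submatrix (fun i : {x // x ∈ s} => (i : Fin n))
      (fun j : {x // x ∈ s} => (j : Fin n)) with hB
    have hmin : ∀ T : Finset {x // x ∈ s}, T.Nonempty →
        0 < (B.submatrix (Subtype.val : {x // x ∈ T} → {x // x ∈ s}) Subtype.val).det := by
      intro T hT
      rw [hB, submatrix_minor_det]
      exact hP _ (hT.image _)
    have hpos : 0 < (B + (-μ) • 1).det := det_add_smul_one_pos B hmin (by linarith)
    have hker : (B + (-μ) • (1 : Matrix _ _ ℝ)).mulVec v = 0 := by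
      rw [Matrix.add_mulVec, Matrix.smul_mulVec, Matrix.one_mulVec, heig]
      simp
    have hdet0 : (B + (-μ) • (1 : Matrix _ _ ℝ)).det = 0 :=
      Matrix.exists_mulVec_eq_zero_iff.mp ⟨v, hv, hker⟩
    linarith
  · intro h s hs
    haveI : Nonempty {x // x ∈ s} := Finset.nonempty_coe_sort.mpr hs
    set B := A.submatrix (fun i : {x // x ∈ s} => (i : Fin n))
      (fun j : {x // x ∈ s} => (j : Fin n)) with hB
    by_contra hle
    push_neg at hle
    have hle' : B.det ≤ 0 := hle
    -- Find `c ≥ 0` with `det (B + c • 1) = 0`.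
    have cont : Continuous fun c : ℝ => (c • B + 1).det :=
      ((continuous_id.smul continuous_const).add continuous_const).matrix_det
    have contf : Continuous fun c : ℝ => (B + c • 1).det :=
      (continuous_const.add (continuous_id.smul continuous_const)).matrix_det
    have tend : Filter.Tendsto (fun t : ℝ => ((t⁻¹ • B + 1 : Matrix _ _ ℝ)).det)
        Filter.atTop (nhds 1) := by
      have h1 : Filter.Tendsto (fun t : ℝ => t⁻¹) Filter.atTop (nhds 0) :=
        tendsto_inv_atTop_zero
      have h2 := (cont.tendsto 0).comp h1
      simpa [Function.comp_def] using h2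
    have hev : ∀ᶠ t : ℝ in Filter.atTop,
        0 < ((t⁻¹ • B + 1 : Matrix _ _ ℝ)).det :=
      tend.eventually (eventually_gt_nhds one_pos)
    obtain ⟨t, ht0, htd⟩ := ((Filter.eventually_gt_atTop 0).and hev).exists
    have htdet : 0 < (B + t • 1).det := by
      have heq : B + t • (1 : Matrix _ _ ℝ) = t • (t⁻¹ • B + 1) := by
        rw [smul_add, smul_smul, mul_inv_cancel₀ ht0.ne', one_smul]
      rw [heq, Matrix.det_smul]
      positivity
    have hf0 : (fun c : ℝ => (B + c • 1).det) 0 ≤ 0 := by simpa using hle'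
    obtain ⟨c, hc, hfc⟩ : ∃ c ∈ Set.Icc (0 : ℝ) t, (B + c • 1).det = 0 := by
      have := intermediate_value_Icc ht0.le contf.continuousOn
      have h0mem : (0 : ℝ) ∈ Set.Icc ((fun c : ℝ => (B + c • 1).det) 0)
          ((fun c : ℝ => (B + c • 1).det) t) := ⟨hf0, htdet.le⟩
      obtain ⟨c, hc, hfc⟩ := this h0mem
      exact ⟨c, hc, hfc⟩
    obtain ⟨v, hv0, hmul⟩ := Matrix.exists_mulVec_eq_zero_iff.mpr hfc
    have heig : B.mulVec v = (-c) • v := by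
      rw [Matrix.add_mulVec, Matrix.smul_mulVec, Matrix.one_mulVec] at hmul
      have := eq_neg_of_add_eq_zero_left hmul
      rw [this, neg_smul]
    have := h s hs (-c) v hv0 heig
    linarith [hc.1]
end

section
/- If A is a P-matrix then A is invertible and A⁻¹ is a P-matrix. -/
open Matrix BigOperators

lemma principalMinor_empty {n : ℕ} (A : Matrix (Fin n) (Fin n) ℝ) :
    principalMinor A ∅ = 1 := by
  haveI : IsEmpty {x // x ∈ (∅ : Finset (Fin n))} := ⟨fun x => Finset.notMem_empty _ x.2⟩
  simp [principalMinor]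

lemma principalMinor_pos {n : ℕ} {A : Matrix (Fin n) (Fin n) ℝ} (hA : IsPMatrix A)
    (s : Finset (Fin n)) : 0 < principalMinor A s := by
  rcases s.eq_empty_or_nonempty with rfl | h
  · simp [principalMinor_empty]
  · exact hA s h

lemma principalMinor_univ {n : ℕ} (A : Matrix (Fin n) (Fin n) ℝ) :
    principalMinor A Finset.univ = A.det := by
  have := Matrix.det_submatrix_equiv_self
    (Equiv.subtypeUnivEquiv (fun x : Fin n => Finset.mem_univ x)) A
  exact this

noncomputable def compl_equiv {n : ℕ} (s : Finset (Fin n)) :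
    {x : Fin n // x ∉ s} ≃ {x : Fin n // x ∈ sᶜ} :=
  Equiv.subtypeEquivRight (fun x => (Finset.mem_compl).symm)

lemma jacobi {n : ℕ} (A : Matrix (Fin n) (Fin n) ℝ) (hA : A.det ≠ 0)
    (hc : ∀ s : Finset (Fin n), 0 < principalMinor A s) (s : Finset (Fin n)) :
    principalMinor A⁻¹ s = principalMinor A sᶜ / A.det := by
  classical
  set e : {x : Fin n // x ∈ s} ⊕ {x : Fin n // x ∉ s} ≃ Fin n :=
    Equiv.sumCompl (fun x => x ∈ s) with he
  set M : Matrix _ _ ℝ := A.submatrix e e with hM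
  have hdetM : M.det = A.det := Matrix.det_submatrix_equiv_self e A
  -- blocks
  set B := M.toBlocks₁₁ with hB
  set C := M.toBlocks₁₂ with hC
  set D := M.toBlocks₂₁ with hD
  set E := M.toBlocks₂₂ with hE
  have hMblocks : M = fromBlocks B C D E := (Matrix.fromBlocks_toBlocks M).symm
  -- det E equals principal minor of complement
  have hEdet : E.det = principalMinor A sᶜ := by
    have := Matrix.det_submatrix_equiv_self (compl_equiv s)
      (A.submatrix (fun i : {x // x ∈ sᶜ} => (i : Fin n)) (fun j : {x // x ∈ sᶜ} => (j : Fin n)))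
    rw [principalMinor, ← this]
    refine congrArg Matrix.det ?_
    ext i j
    rfl
  have hEdet_pos : 0 < E.det := hEdet ▸ hc sᶜ
  haveI : Invertible E := E.invertibleOfIsUnitDet (isUnit_iff_ne_zero.2 hEdet_pos.ne')
  haveI : Invertible M := M.invertibleOfIsUnitDet (isUnit_iff_ne_zero.2 (hdetM ▸ hA))
  have hdetblocks : M.det = E.det * (B - C * ⅟E * D).det := by
    rw [hMblocks]; exact Matrix.det_fromBlocks₂₂ B C D E
  have hSchurdet : (B - C * ⅟E * D).det ≠ 0 := by
    intro h
    rw [hdetM] at hdetblocks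
    rw [hdetblocks, h, mul_zero] at hA
    exact hA rfl
  haveI : Invertible (B - C * ⅟E * D) :=
    (B - C * ⅟E * D).invertibleOfIsUnitDet (isUnit_iff_ne_zero.2 hSchurdet)
  haveI : Invertible (fromBlocks B C D E) := hMblocks ▸ ‹Invertible M›
  -- inverse of M
  have hMinv : M⁻¹ = A⁻¹.submatrix e e := by
    rw [hM, Matrix.inv_submatrix_equiv]
  have hinvOf : ⅟(fromBlocks B C D E) =
      fromBlocks (⅟(B - C * ⅟E * D)) (-(⅟(B - C * ⅟E * D) * C * ⅟E))
        (-(⅟E * D * ⅟(B - C * ⅟E * D))) (⅟E + ⅟E * D * ⅟(B - C * ⅟E * D) * C * ⅟E) :=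
    Matrix.invOf_fromBlocks₂₂_eq B C D E
  have htop : (A⁻¹.submatrix e e).toBlocks₁₁ = ⅟(B - C * ⅟E * D) := by
    rw [← hMinv, hMblocks, ← Matrix.invOf_eq_nonsing_inv, hinvOf]
    exact Matrix.toBlocks_fromBlocks₁₁ _ _ _ _
  have hpm : principalMinor A⁻¹ s = ((A⁻¹.submatrix e e).toBlocks₁₁).det := by
    rw [principalMinor]
    congr 1
  rw [hpm, htop, Matrix.invOf_eq_nonsing_inv, Matrix.det_nonsing_inv, Ring.inverse_eq_inv,
    ← hEdet]
  have hAd : A.det = E.det * (B - C * ⅟E * D).det := hdetM ▸ hdetblocks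
  rw [hAd, div_mul_eq_div_div, div_self hEdet_pos.ne', one_div]

/-- A P-matrix is invertible and its inverse is a P-matrix. -/
theorem IsPMatrix.inv {n : ℕ} (A : Matrix (Fin n) (Fin n) ℝ)
    (hA : IsPMatrix A) : IsUnit A ∧ IsPMatrix A⁻¹ := by
  have hdet : 0 < A.det := by
    have := principalMinor_pos hA Finset.univ
    rwa [principalMinor_univ] at this
  have hunit : IsUnit A := (Matrix.isUnit_iff_isUnit_det A).2 (isUnit_iff_ne_zero.2 hdet.ne')
  refine ⟨hunit, fun s _ => ?_⟩
  rw [jacobi A hdet.ne' (principalMinor_pos hA) s]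
  exact div_pos (principalMinor_pos hA sᶜ) hdet
end

section
/- (Fisher–Fuller) If A is a real n×n matrix all of whose leading principal minors are positive, then there exists a diagonal matrix D with positive diagonal entries such that all eigenvalues of DA are real, positive and simple. -/
open Matrix BigOperators Polynomial


lemma ff_eval_charpoly {m : ℕ} (M : Matrix (Fin m) (Fin m) ℝ) (x : ℝ) :
    M.charpoly.eval x = (Matrix.of fun i j => (if i = j then x else 0) - M i j).det := by
  rw [Matrix.charpoly, ← Polynomial.coe_evalRingHom, RingHom.map_det]
  congr 1
  ext i j
  by_cases h : i = j <;>
    simp [Matrix.charmatrix_apply, Matrix.diagonal_apply, h, Matrix.map_apply]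

lemma ff_key {n : ℕ} (A : Matrix (Fin (n+1)) (Fin (n+1)) ℝ) (d' : Fin n → ℝ) (ε x : ℝ) :
    ((Matrix.diagonal (Fin.snoc d' ε) * A).charpoly).eval x
      = x * ((Matrix.diagonal d' * (A.submatrix Fin.castSucc Fin.castSucc)).charpoly).eval x
        - ε * (Matrix.updateRow
            (Matrix.of fun i j => (if i = j then x else 0) - (Matrix.diagonal (Fin.snoc d' 0) * A) i j)
            (Fin.last n) (A (Fin.last n))).det := by
  set M0 : Matrix (Fin (n+1)) (Fin (n+1)) ℝ :=
    Matrix.of fun i j => (if i = j then x else 0) - (Matrix.diagonal (Fin.snoc d' 0) * A) i j with hM0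
  rw [ff_eval_charpoly]
  have h1 : (Matrix.of fun i j => (if i = j then x else 0) - (Matrix.diagonal (Fin.snoc d' ε) * A) i j)
      = Matrix.updateRow M0 (Fin.last n) (x • (Pi.single (Fin.last n) 1 : Fin (n+1) → ℝ) + (-ε) • A (Fin.last n)) := by
    ext i j
    by_cases hi : i = Fin.last n
    · subst hi
      simp only [Matrix.updateRow_self, Matrix.of_apply, Matrix.diagonal_mul, Fin.snoc_last,
        Pi.add_apply, Pi.smul_apply, Pi.single_apply, smul_eq_mul]
      rcases eq_or_ne (Fin.last n) j with hj | hj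
      · subst hj; simp; ring
      · simp [hj, hj.symm]
    · obtain ⟨i', rfl⟩ := Fin.exists_castSucc_eq.mpr hi
      simp [hM0, Matrix.updateRow_ne hi, Matrix.diagonal_mul, Fin.snoc_castSucc]
  rw [h1, Matrix.det_updateRow_add, Matrix.det_updateRow_smul, Matrix.det_updateRow_smul]
  have h2 : (Matrix.updateRow M0 (Fin.last n) (Pi.single (Fin.last n) 1 : Fin (n+1) → ℝ)).det
      = ((Matrix.diagonal d' * (A.submatrix Fin.castSucc Fin.castSucc)).charpoly).eval x := by
    rw [ff_eval_charpoly]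
    rw [← Matrix.det_submatrix_equiv_self (finSumFinEquiv (m := n) (n := 1))]
    have h3 : (Matrix.updateRow M0 (Fin.last n) (Pi.single (Fin.last n) 1 : Fin (n+1) → ℝ)).submatrix
          finSumFinEquiv finSumFinEquiv
        = Matrix.fromBlocks
            (Matrix.of fun i j => (if i = j then x else 0)
              - (Matrix.diagonal d' * (A.submatrix Fin.castSucc Fin.castSucc)) i j)
            (Matrix.of fun i _ => M0 (Fin.castSucc i) (Fin.last n)) 0 1 := by
      ext i j
      have hlast : ∀ j : Fin 1, finSumFinEquiv (Sum.inr j) = Fin.last n := by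
        intro j
        apply Fin.ext
        simp [Fin.last, Fin.ext_iff, Subsingleton.elim j 0]
      have hcs : ∀ i : Fin n, finSumFinEquiv (Sum.inl i) = Fin.castSucc i := by
        intro i; apply Fin.ext; simp
      rcases i with i | i <;> rcases j with j | j
      · have hne : Fin.castSucc i ≠ Fin.last n := (Fin.castSucc_lt_last i).ne
        simp only [Matrix.submatrix_apply, hcs, Matrix.updateRow_ne hne,
          Matrix.fromBlocks_apply₁₁, hM0, Matrix.of_apply, Matrix.diagonal_mul,
          Fin.snoc_castSucc, Matrix.submatrix_apply]
        congr 1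
        simp [Fin.castSucc_inj]
      · have hne : Fin.castSucc i ≠ Fin.last n := (Fin.castSucc_lt_last i).ne
        simp [Matrix.submatrix_apply, hcs, hlast, Matrix.updateRow_ne hne]
      · have hne : Fin.castSucc j ≠ Fin.last n := (Fin.castSucc_lt_last j).ne
        simp [Matrix.submatrix_apply, hcs, hlast, Matrix.updateRow_self,
          Pi.single_apply, hne.symm, (Fin.castSucc_lt_last j).ne']
      · simp [Matrix.submatrix_apply, hlast, Matrix.updateRow_self, Pi.single_apply,
          Subsingleton.elim i j]
    rw [h3, Matrix.det_fromBlocks_zero₂₁]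
    simp
  rw [h2]
  ring

lemma ff_monic_eq_prod {m : ℕ} (p : ℝ[X]) (hp : p.Monic) (hdeg : p.natDegree = m)
    (μ : Fin m → ℝ) (hinj : Function.Injective μ) (hroot : ∀ i, p.eval (μ i) = 0) :
    p = ∏ i, (X - C (μ i)) := by
  have hQ : (∏ i, (X - C (μ i)) : ℝ[X]) ∣ p := by
    refine Finset.prod_dvd_of_coprime ?_ ?_
    · intro i _ j _ hij
      exact Polynomial.pairwise_coprime_X_sub_C hinj hij
    · intro i _
      exact Polynomial.dvd_iff_isRoot.mpr (hroot i)
  have hQm : (∏ i, (X - C (μ i)) : ℝ[X]).Monic :=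
    Polynomial.monic_prod_of_monic _ _ fun i _ => Polynomial.monic_X_sub_C _
  have hQdeg : (∏ i, (X - C (μ i)) : ℝ[X]).natDegree = m := by
    rw [Polynomial.natDegree_prod _ _ fun i _ => Polynomial.X_sub_C_ne_zero _]
    simp
  exact (Polynomial.eq_of_monic_of_dvd_of_natDegree_le hQm hp hQ (by rw [hdeg, hQdeg]))


lemma ff_const {m : ℕ} (M : Matrix (Fin m) (Fin m) ℝ) :
    M.charpoly.eval 0 = (-1 : ℝ)^m * M.det := by
  have h := Matrix.det_eq_sign_charpoly_coeff M
  rw [← Polynomial.coeff_zero_eq_eval_zero, h, Fintype.card_fin]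
  rw [← mul_assoc, ← mul_pow]
  simp

lemma ff_card_filter {n k : ℕ} (hk : k ≤ n) :
    (Finset.univ.filter fun i : Fin n => k ≤ (i : ℕ)).card = n - k := by
  rw [Finset.card_filter, Fin.sum_univ_eq_sum_range (fun i => if k ≤ i then 1 else 0) n,
    ← Finset.card_filter]
  have : (Finset.range n).filter (fun i => k ≤ i) = Finset.Ico k n := by
    ext i; simp [Finset.mem_range, and_comm]
  rw [this, Nat.card_Ico]

-- sign of the product at a test point
lemma ff_prod_sign {n k : ℕ} (hk : k ≤ n) (ν : Fin n → ℝ) (c : ℝ)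
    (h : ∀ i : Fin n, if (i : ℕ) < k then ν i < c else c < ν i) :
    0 < (-1 : ℝ)^(n - k) * ∏ i, (c - ν i) := by
  have : ((-1 : ℝ)^(n-k) * ∏ i, (c - ν i))
      = ∏ i : Fin n, (if k ≤ (i : ℕ) then -1 else 1) * (c - ν i) := by
    rw [Finset.prod_mul_distrib, Finset.prod_ite, Finset.prod_const, Finset.prod_const,
      ff_card_filter hk]
    simp
  rw [this]
  apply Finset.prod_pos
  intro i _
  have := h i
  by_cases hik : (i : ℕ) < k
  · simp only [if_pos hik] at this
    simp [Nat.not_le.mpr hik, sub_pos.mpr this]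
  · simp only [if_neg hik] at this
    have : c - ν i < 0 := by linarith
    rw [if_pos (Nat.not_lt.mp hik)]
    nlinarith

theorem ff_main (n : ℕ) : ∀ (A : Matrix (Fin n) (Fin n) ℝ),
    (∀ k : ℕ, (hk : k ≤ n) → 1 ≤ k →
      0 < (A.submatrix (Fin.castLE hk) (Fin.castLE hk)).det) →
    ∃ d : Fin n → ℝ, (∀ i, 0 < d i) ∧
      ∃ μ : Fin n → ℝ, Function.Injective μ ∧ (∀ i, 0 < μ i) ∧
        (Matrix.diagonal d * A).charpoly = ∏ i, (X - C (μ i)) := by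
  induction n with
  | zero =>
    intro A _
    refine ⟨fun i => i.elim0, fun i => i.elim0, fun i => i.elim0, fun i => i.elim0,
      fun i => i.elim0, ?_⟩
    have : (Matrix.diagonal (fun i : Fin 0 => i.elim0 : Fin 0 → ℝ) * A).charpoly = 1 := by
      apply Polynomial.eq_one_of_monic_natDegree_zero (Matrix.charpoly_monic _)
      simp [Matrix.charpoly_natDegree_eq_dim]
    rw [this]
    simp
  | succ n IH =>
    intro A hA
    set A' : Matrix (Fin n) (Fin n) ℝ := A.submatrix Fin.castSucc Fin.castSucc with hA'def
    have hA'minors : ∀ k : ℕ, (hk : k ≤ n) → 1 ≤ k →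
        0 < (A'.submatrix (Fin.castLE hk) (Fin.castLE hk)).det := by
      intro k hk h1
      have h2 : k ≤ n + 1 := hk.trans n.le_succ
      have heq : A'.submatrix (Fin.castLE hk) (Fin.castLE hk)
          = A.submatrix (Fin.castLE h2) (Fin.castLE h2) := by
        ext i j; rfl
      rw [heq]; exact hA k h2 h1
    obtain ⟨d', hd', μ0, hμ0inj, hμ0pos, hq0⟩ := IH A' hA'minors
    -- sort the eigenvalues
    set ν : Fin n → ℝ := μ0 ∘ Tuple.sort μ0 with hνdef
    have hνinj : Function.Injective ν := hμ0inj.comp (Equiv.injective _)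
    have hνmono : StrictMono ν := (Tuple.monotone_sort μ0).strictMono_of_injective hνinj
    have hνpos : ∀ i, 0 < ν i := fun i => hμ0pos _
    have hq : (Matrix.diagonal d' * A').charpoly = ∏ i, (X - C (ν i)) := by
      rw [hq0]
      exact (Equiv.prod_comp (Tuple.sort μ0) (fun i => X - C (μ0 i))).symm
    have hqev : ∀ x : ℝ, ((Matrix.diagonal d' * A').charpoly).eval x = ∏ i, (x - ν i) := by
      intro x; rw [hq]; simp [Polynomial.eval_prod]
    -- the perturbation function g
    set g : ℝ → ℝ := fun x => (Matrix.updateRow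
        (Matrix.of fun i j => (if i = j then x else 0) - (Matrix.diagonal (Fin.snoc d' 0) * A) i j)
        (Fin.last n) (A (Fin.last n))).det with hgdef
    have key : ∀ ε x : ℝ, ((Matrix.diagonal (Fin.snoc d' ε) * A).charpoly).eval x
        = x * (∏ i, (x - ν i)) - ε * g x := by
      intro ε x
      rw [ff_key A d' ε x, hqev]
    -- det A is positive
    have hdetA : 0 < A.det := by
      have := hA (n+1) le_rfl (by omega)
      have heq : A.submatrix (Fin.castLE (le_refl (n+1))) (Fin.castLE (le_refl (n+1))) = A := by
        ext i j; rfl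
      rwa [heq] at this
    have hd'prod : 0 < ∏ i, d' i := Finset.prod_pos fun i _ => hd' i
    -- test points
    set Xb : ℝ := (∑ i, ν i) + 1 with hXbdef
    have hXb : ∀ i, ν i < Xb := by
      intro i
      have h1 : ν i ≤ ∑ j, ν j :=
        Finset.single_le_sum (fun j _ => (hνpos j).le) (Finset.mem_univ i)
      have : (0:ℝ) < 1 := one_pos
      simp only [hXbdef]; linarith
    have hXbpos : 0 < Xb := by
      have : (0:ℝ) ≤ ∑ i, ν i := Finset.sum_nonneg (fun i _ => (hνpos i).le)
      simp only [hXbdef]; linarith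
    set u : ℕ → ℝ := fun j => if h : 0 < j ∧ j - 1 < n then ν ⟨j-1, h.2⟩
        else if j = 0 then 0 else Xb with hudef
    have hu0 : u 0 = 0 := by simp [hudef]
    have huν : ∀ i : Fin n, u ((i : ℕ) + 1) = ν i := by
      intro i
      have h : 0 < (i:ℕ)+1 ∧ (i:ℕ)+1-1 < n := ⟨Nat.succ_pos _, by simpa using i.isLt⟩
      simp only [hudef, dif_pos h]
      congr 1
    have hutop : ∀ j, n < j → u j = Xb := by
      intro j hj
      have : ¬ (0 < j ∧ j - 1 < n) := by omega
      simp only [hudef, dif_neg this, if_neg (by omega : j ≠ 0)]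
    have humono : ∀ a b, a < b → b ≤ n + 1 → u a < u b := by
      intro a b hab hb
      rcases Nat.eq_zero_or_pos a with ha | ha
      · subst ha
        rw [hu0]
        rcases Nat.lt_or_ge n b with h | h
        · rw [hutop b h]; exact hXbpos
        · obtain ⟨b', rfl⟩ : ∃ b', b = b' + 1 := ⟨b - 1, by omega⟩
          have hb' : b' < n := by omega
          rw [show b' + 1 = ((⟨b', hb'⟩ : Fin n) : ℕ) + 1 from rfl, huν]
          exact hνpos _
      · obtain ⟨a', rfl⟩ : ∃ a', a = a' + 1 := ⟨a - 1, by omega⟩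
        have ha' : a' < n := by omega
        rw [show a' + 1 = ((⟨a', ha'⟩ : Fin n) : ℕ) + 1 from rfl, huν]
        rcases Nat.lt_or_ge n b with h | h
        · rw [hutop b h]; exact hXb _
        · obtain ⟨b', rfl⟩ : ∃ b', b = b' + 1 := ⟨b - 1, by omega⟩
          have hb' : b' < n := by omega
          rw [show b' + 1 = ((⟨b', hb'⟩ : Fin n) : ℕ) + 1 from rfl, huν]
          exact hνmono (by simpa [Fin.lt_def] using (by omega : a' < b'))
    have hule : ∀ a b, a ≤ b → b ≤ n + 1 → u a ≤ u b := by
      intro a b hab hb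
      rcases Nat.lt_or_ge a b with h | h
      · exact (humono a b h hb).le
      · have : a = b := by omega
        rw [this]
    set c : ℕ → ℝ := fun k => (u k + u (k+1)) / 2 with hcdef
    have hc1 : ∀ k, k ≤ n → u k < c k := by
      intro k hk
      have := humono k (k+1) (Nat.lt_succ_self _) (by omega)
      simp only [hcdef]; linarith
    have hc2 : ∀ k, k ≤ n → c k < u (k+1) := by
      intro k hk
      have := humono k (k+1) (Nat.lt_succ_self _) (by omega)
      simp only [hcdef]; linarith
    have hcpos : ∀ k, k ≤ n → 0 < c k := by
      intro k hk
      rcases Nat.eq_zero_or_pos k with h | h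
      · subst h; rw [← hu0]; exact hc1 0 (by omega)
      · calc (0:ℝ) = u 0 := hu0.symm
          _ < u k := humono 0 k h (by omega)
          _ < c k := hc1 k hk
    have hinter : ∀ k, k ≤ n → ∀ i : Fin n, if (i : ℕ) < k then ν i < c k else c k < ν i := by
      intro k hk i
      by_cases h : (i : ℕ) < k
      · rw [if_pos h]
        calc ν i = u ((i:ℕ)+1) := (huν i).symm
          _ ≤ u k := hule _ _ (by omega) (by omega)
          _ < c k := hc1 k hk
      · rw [if_neg h]
        calc c k < u (k+1) := hc2 k hk
          _ ≤ u ((i:ℕ)+1) := hule _ _ (by omega) (by omega)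
          _ = ν i := huν i
    -- sign of b k
    set b : ℕ → ℝ := fun k => c k * ∏ i, (c k - ν i) with hbdef
    have hbsign : ∀ k, k ≤ n → 0 < (-1:ℝ)^(n-k) * b k := by
      intro k hk
      have h1 := ff_prod_sign hk ν (c k) (hinter k hk)
      have h2 := hcpos k hk
      calc (0:ℝ) < c k * ((-1:ℝ)^(n-k) * ∏ i, (c k - ν i)) := mul_pos h2 h1
        _ = (-1:ℝ)^(n-k) * b k := by simp only [hbdef]; ring
    have hbne : ∀ k, k ≤ n → 0 < |b k| := by
      intro k hk
      apply abs_pos.mpr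
      intro h0
      have := hbsign k hk
      rw [h0, mul_zero] at this
      exact lt_irrefl 0 this
    -- choice of ε
    obtain ⟨ε, hεpos, hεsmall⟩ : ∃ ε : ℝ, 0 < ε ∧ ∀ k, k ≤ n → ε * |g (c k)| < |b k| := by
      set S : Finset ℝ := (Finset.range (n+1)).image fun k => |b k| with hSdef
      have hSne : S.Nonempty :=
        ⟨|b 0|, Finset.mem_image.mpr ⟨0, Finset.mem_range.mpr (by omega), rfl⟩⟩
      set mm : ℝ := S.min' hSne with hmmdef
      have hmmpos : 0 < mm := by
        obtain ⟨k, hk, hkeq⟩ := Finset.mem_image.mp (S.min'_mem hSne)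
        have hk' : k ≤ n := Nat.lt_succ_iff.mp (Finset.mem_range.mp hk)
        rw [hmmdef, ← hkeq]
        exact hbne k hk'
      have hmmle : ∀ k, k ≤ n → mm ≤ |b k| := by
        intro k hk
        exact S.min'_le _ (Finset.mem_image.mpr ⟨k, Finset.mem_range.mpr (by omega), rfl⟩)
      set T : Finset ℝ := (Finset.range (n+1)).image fun k => |g (c k)| with hTdef
      have hTne : T.Nonempty :=
        ⟨|g (c 0)|, Finset.mem_image.mpr ⟨0, Finset.mem_range.mpr (by omega), rfl⟩⟩
      set BB : ℝ := T.max' hTne + 1 with hBBdef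
      have hBBpos : 0 < BB := by
        have h0 : (0:ℝ) ≤ |g (c 0)| := abs_nonneg _
        have h1 : |g (c 0)| ≤ T.max' hTne :=
          T.le_max' _ (Finset.mem_image.mpr ⟨0, Finset.mem_range.mpr (by omega), rfl⟩)
        rw [hBBdef]; linarith
      have hgle : ∀ k, k ≤ n → |g (c k)| ≤ BB - 1 := by
        intro k hk
        have := T.le_max' (|g (c k)|)
          (Finset.mem_image.mpr ⟨k, Finset.mem_range.mpr (by omega), rfl⟩)
        rw [hBBdef]; linarith
      refine ⟨mm / BB, div_pos hmmpos hBBpos, ?_⟩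
      intro k hk
      have h1 : mm / BB * |g (c k)| ≤ mm / BB * (BB - 1) :=
        mul_le_mul_of_nonneg_left (hgle k hk) (div_pos hmmpos hBBpos).le
      have h2 : mm / BB * (BB - 1) < mm / BB * BB :=
        mul_lt_mul_of_pos_left (by linarith) (div_pos hmmpos hBBpos)
      have h3 : mm / BB * BB = mm := div_mul_cancel₀ mm hBBpos.ne'
      have h4 := hmmle k hk
      linarith
    -- the polynomial p
    set p : ℝ[X] := (Matrix.diagonal (Fin.snoc d' ε) * A).charpoly with hpdef
    -- IVT points
    set t : ℕ → ℝ := fun j => if j = 0 then 0 else c (j-1) with htdef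
    have ht0 : t 0 = 0 := by simp [htdef]
    have htc : ∀ k, t (k+1) = c k := by intro k; simp [htdef]
    have htmono : ∀ a bb, a < bb → bb ≤ n + 1 → t a < t bb := by
      intro a bb hab hb
      obtain ⟨b', rfl⟩ : ∃ b', bb = b' + 1 := ⟨bb - 1, by omega⟩
      rw [htc]
      rcases Nat.eq_zero_or_pos a with ha | ha
      · subst ha; rw [ht0]; exact hcpos b' (by omega)
      · obtain ⟨a', rfl⟩ : ∃ a', a = a' + 1 := ⟨a - 1, by omega⟩
        rw [htc]
        calc c a' < u (a'+1) := hc2 a' (by omega)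
          _ ≤ u b' := hule _ _ (by omega) (by omega)
          _ < c b' := hc1 b' (by omega)
    -- the sign of p at the test points
    have hsgn : ∀ j, j ≤ n + 1 → 0 < (-1:ℝ)^(n+1-j) * p.eval (t j) := by
      intro j hj
      rcases Nat.eq_zero_or_pos j with hj0 | hj0
      · subst hj0
        rw [ht0, Nat.sub_zero]
        have hev : p.eval 0 = (-1:ℝ)^(n+1) * ((∏ i, d' i) * ε * A.det) := by
          rw [hpdef, ff_const]
          congr 1
          rw [Matrix.det_mul, Matrix.det_diagonal]
          rw [Fin.prod_snoc]
        rw [hev, ← mul_assoc, ← mul_pow]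
        simp only [neg_mul_neg, one_mul, one_pow]
        positivity
      · obtain ⟨k, rfl⟩ : ∃ k, j = k + 1 := ⟨j - 1, by omega⟩
        have hk : k ≤ n := by omega
        rw [htc, show n + 1 - (k+1) = n - k from by omega]
        have hev : p.eval (c k) = b k - ε * g (c k) := by
          rw [hpdef, key ε (c k), hbdef]
        rw [hev]
        have h1 : (-1:ℝ)^(n-k) * b k = |b k| := by
          have habs : |b k| = |(-1:ℝ)^(n-k) * b k| := by
            simp [abs_mul, abs_pow]
          rw [habs, abs_of_pos (hbsign k hk)]
        have h2 : (-1:ℝ)^(n-k) * (ε * g (c k)) ≤ ε * |g (c k)| := by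
          have hle : (-1:ℝ)^(n-k) * g (c k) ≤ |g (c k)| := by
            calc (-1:ℝ)^(n-k) * g (c k) ≤ |(-1:ℝ)^(n-k) * g (c k)| := le_abs_self _
              _ = |g (c k)| := by simp [abs_mul, abs_pow]
          calc (-1:ℝ)^(n-k) * (ε * g (c k)) = ε * ((-1:ℝ)^(n-k) * g (c k)) := by ring
            _ ≤ ε * |g (c k)| := mul_le_mul_of_nonneg_left hle hεpos.le
        have h3 := hεsmall k hk
        have : (-1:ℝ)^(n-k) * (b k - ε * g (c k))
            = (-1:ℝ)^(n-k) * b k - (-1:ℝ)^(n-k) * (ε * g (c k)) := by ring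
        rw [this, h1]
        linarith
    -- IVT
    have hcont : ContinuousOn (fun y => p.eval y) (Set.univ : Set ℝ) :=
      (Polynomial.continuous p).continuousOn
    have hroot : ∀ j, j ≤ n → ∃ r, t j < r ∧ r < t (j+1) ∧ p.eval r = 0 := by
      intro j hj
      have hs1 := hsgn j (by omega)
      have hs2 := hsgn (j+1) (by omega)
      have hlt : t j < t (j+1) := htmono j (j+1) (Nat.lt_succ_self _) (by omega)
      have hexp : n + 1 - j = (n - j) + 1 := by omega
      rw [show n + 1 - (j+1) = n - j from by omega] at hs2
      rw [hexp] at hs1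
      have hco : ContinuousOn (fun y => p.eval y) (Set.Icc (t j) (t (j+1))) :=
        (Polynomial.continuous p).continuousOn
      rcases Nat.even_or_odd (n - j) with hpar | hpar
      · -- p (t j) < 0 < p (t (j+1))
        have e1 : ((-1:ℝ))^(n-j) = 1 := hpar.neg_one_pow
        have e2 : ((-1:ℝ))^((n-j)+1) = -1 := by rw [pow_succ, e1]; ring
        rw [e2] at hs1; rw [e1] at hs2
        have hm : (0:ℝ) ∈ Set.Ioo (p.eval (t j)) (p.eval (t (j+1))) := by
          constructor <;> [linarith; linarith]
        obtain ⟨r, hr, hr0⟩ := intermediate_value_Ioo hlt.le hco hm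
        exact ⟨r, hr.1, hr.2, hr0⟩
      · have e1 : ((-1:ℝ))^(n-j) = -1 := hpar.neg_one_pow
        have e2 : ((-1:ℝ))^((n-j)+1) = 1 := by rw [pow_succ, e1]; ring
        rw [e2] at hs1; rw [e1] at hs2
        have hm : (0:ℝ) ∈ Set.Ioo (p.eval (t (j+1))) (p.eval (t j)) := by
          constructor <;> [linarith; linarith]
        obtain ⟨r, hr, hr0⟩ := intermediate_value_Ioo' hlt.le hco hm
        exact ⟨r, hr.1, hr.2, hr0⟩
    have hroot' : ∀ j : Fin (n+1), ∃ r, t (j:ℕ) < r ∧ r < t ((j:ℕ)+1) ∧ p.eval r = 0 :=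
      fun j => hroot j (by omega)
    choose μ hμ1 hμ2 hμ3 using hroot'
    have hμmono : StrictMono μ := by
      intro i j hij
      have h1 : μ i < t ((i:ℕ)+1) := hμ2 i
      have h2 : t (j:ℕ) < μ j := hμ1 j
      have h3 : t ((i:ℕ)+1) ≤ t (j:ℕ) := by
        rcases Nat.lt_or_ge ((i:ℕ)+1) (j:ℕ) with h | h
        · exact (htmono _ _ h (by omega)).le
        · have : (i:ℕ)+1 = (j:ℕ) := by
            have := (Fin.lt_def.mp hij); omega
          rw [this]
      linarith
    have hμpos : ∀ j, 0 < μ j := by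
      intro j
      have h2 : t (j:ℕ) < μ j := hμ1 j
      rcases Nat.eq_zero_or_pos (j:ℕ) with h | h
      · rw [h, ht0] at h2; exact h2
      · have := htmono 0 (j:ℕ) h (by omega)
        rw [ht0] at this; linarith
    refine ⟨Fin.snoc d' ε, ?_, μ, hμmono.injective, hμpos, ?_⟩
    · intro i
      refine Fin.lastCases ?_ ?_ i
      · rw [Fin.snoc_last]; exact hεpos
      · intro k; rw [Fin.snoc_castSucc]; exact hd' k
    · refine ff_monic_eq_prod _ (Matrix.charpoly_monic _) ?_ μ hμmono.injective hμ3
      rw [Matrix.charpoly_natDegree_eq_dim, Fintype.card_fin]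

/-- (Fisher–Fuller) If all leading principal minors of a real `n × n` matrix `A`
are positive, then there is a positive diagonal matrix `D` such that all the
eigenvalues of `D * A` are real, positive and simple (the characteristic
polynomial of `D * A` has `n` distinct positive real roots). -/
theorem fisher_fuller {n : ℕ} (A : Matrix (Fin n) (Fin n) ℝ)
    (hA : ∀ k : ℕ, (hk : k ≤ n) → 1 ≤ k →
      0 < (A.submatrix (Fin.castLE hk) (Fin.castLE hk)).det) :
    ∃ d : Fin n → ℝ, (∀ i, 0 < d i) ∧
      ∃ μ : Fin n → ℝ, Function.Injective μ ∧ (∀ i, 0 < μ i) ∧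
        (Matrix.diagonal d * A).charpoly = ∏ i, (X - C (μ i)) := by
  exact ff_main n A hA
end

section
/- Let A be a real n×n matrix all of whose leading principal minors are positive. Then A admits a stabilization matrix of the form D = diag(ε₁, ε₂, …, εₙ) with 1 = ε₁ > ε₂ > … > εₙ > 0, i.e., all eigenvalues of DA are positive and simple. -/
open Matrix BigOperators Polynomial

lemma aux_signprod {ι : Type*} [DecidableEq ι] (s : Finset ι) (f : ι → ℝ)
    (h : ∀ i ∈ s, f i < 0) : 0 < (-1)^s.card * ∏ i ∈ s, f i := by
  induction s using Finset.induction with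
  | empty => simp
  | insert a t hx ih =>
    rw [Finset.prod_insert hx, Finset.card_insert_of_notMem hx, pow_succ]
    have h1 := ih (fun i hi => h i (Finset.mem_insert_of_mem hi))
    have h2 := h a (Finset.mem_insert_self a t)
    nlinarith

lemma aux_strictMono_cons {k : ℕ} (a : ℝ) (f : Fin k → ℝ) (h0 : ∀ i, a < f i)
    (hf : StrictMono f) : StrictMono (Fin.cons a f) := by
  intro i j hij
  induction j using Fin.cases with
  | zero => exact absurd hij (by simp [Fin.lt_iff_val_lt_val])
  | succ j' =>
    induction i using Fin.cases with
    | zero => simpa using h0 j'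
    | succ i' =>
      simp only [Fin.cons_succ]
      exact hf (by simpa [Fin.succ_lt_succ_iff] using hij)

lemma aux_strictAnti_snoc {k : ℕ} (a : ℝ) (f : Fin k → ℝ) (hf : StrictAnti f)
    (ha : ∀ i, a < f i) : StrictAnti (Fin.snoc f a) := by
  intro i j hij
  induction j using Fin.lastCases with
  | last =>
    have hi : i ≠ Fin.last k := Fin.ne_last_of_lt hij
    obtain ⟨i', rfl⟩ := Fin.exists_castSucc_eq.mpr hi
    simpa using ha i'
  | cast j' =>
    have hi : i ≠ Fin.last k := by
      intro h; subst h
      exact absurd hij (Fin.castSucc_lt_last j').asymm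
    obtain ⟨i', rfl⟩ := Fin.exists_castSucc_eq.mpr hi
    simp only [Fin.snoc_castSucc]
    exact hf (by simpa [Fin.castSucc_lt_castSucc_iff] using hij)

lemma aux_root_of_sign (p : ℝ[X]) (a b : ℝ) (hab : a < b)
    (h : p.eval a * p.eval b < 0) : ∃ x ∈ Set.Ioo a b, p.eval x = 0 := by
  have hc : ContinuousOn (fun x => p.eval x) (Set.Icc a b) := p.continuous.continuousOn
  rcases lt_or_ge (p.eval a) 0 with ha | ha
  · have hb : 0 < p.eval b := by nlinarith
    have := intermediate_value_Ioo (le_of_lt hab) hc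
    obtain ⟨x, hx, hxe⟩ := this (Set.mem_Ioo.mpr ⟨ha, hb⟩)
    exact ⟨x, hx, hxe⟩
  · have ha' : 0 < p.eval a := by
      rcases ha.eq_or_lt with h'|h'
      · rw [← h'] at h; simp at h
      · exact h'
    have hb : p.eval b < 0 := by nlinarith
    have := intermediate_value_Ioo' (le_of_lt hab) hc
    obtain ⟨x, hx, hxe⟩ := this (Set.mem_Ioo.mpr ⟨hb, ha'⟩)
    exact ⟨x, hx, hxe⟩

lemma aux_charmatrix_submatrix {k l : ℕ} (M : Matrix (Fin k) (Fin k) ℝ)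
    (f : Fin l → Fin k) (hf : Function.Injective f) :
    (charmatrix M).submatrix f f = charmatrix (M.submatrix f f) := by
  ext i j
  by_cases h : i = j
  · subst h; simp [charmatrix_apply_eq]
  · rw [submatrix_apply, charmatrix_apply_ne _ _ _ (fun hc => h (hf hc)),
      charmatrix_apply_ne _ _ _ h, submatrix_apply]

lemma aux_key (k : ℕ) (μ : Fin k → ℝ) (hμ : StrictMono μ) (hpos : ∀ i, 0 < μ i)
    (r : ℝ[X]) (hr0 : 0 < (-1)^k * r.eval 0) :
    ∃ δ₀ > (0:ℝ), ∀ δ : ℝ, 0 < δ → δ < δ₀ →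
      ∃ ν : Fin (k+1) → ℝ, StrictMono ν ∧ (∀ i, 0 < ν i) ∧
        ∀ i, (X * ∏ j, (X - C (μ j)) - C δ * r).eval (ν i) = 0 := by
  classical
  -- the roots of x * ∏ (x - μ j)
  set m : Fin (k+1) → ℝ := Fin.cons 0 μ with hm_def
  have hm : StrictMono m := aux_strictMono_cons 0 μ hpos hμ
  have hm0 : m 0 = 0 := rfl
  have hmsucc : ∀ j : Fin k, m j.succ = μ j := fun j => by rw [hm_def, Fin.cons_succ]
  -- test points
  have hmμ : ∀ (i : Fin (k+1)) (h : (i:ℕ) < k), m i < μ ⟨i, h⟩ := by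
    intro i h
    have : m i < m (⟨(i:ℕ), h⟩ : Fin k).succ :=
      hm (by simp [Fin.lt_iff_val_lt_val])
    rwa [hmsucc] at this
  obtain ⟨T, hTa, hTb⟩ : ∃ T : Fin (k+1) → ℝ,
      (∀ i, m i < T i) ∧ (∀ i j : Fin (k+1), i < j → T i < m j) := by
    refine ⟨fun i => if h : (i : ℕ) < k then (m i + μ ⟨i, h⟩) / 2 else m i + 1, ?_, ?_⟩
    · intro i
      simp only []
      by_cases h : (i:ℕ) < k
      · rw [dif_pos h]; have := hmμ i h; linarith
      · rw [dif_neg h]; linarith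
    · intro i j hij
      simp only []
      have h : (i:ℕ) < k := by
        have h1 : (i:ℕ) < (j:ℕ) := hij
        have h2 := j.isLt; omega
      have h1 : (if h : (i : ℕ) < k then (m i + μ ⟨i, h⟩) / 2 else m i + 1) < μ ⟨i, h⟩ := by
        rw [dif_pos h]; have := hmμ i h; linarith
      have h2 : (⟨(i:ℕ), h⟩ : Fin k).succ ≤ j := by
        have h3 : (i:ℕ) < (j:ℕ) := hij
        simp only [Fin.le_iff_val_le_val, Fin.val_succ]; omega
      calc (if h : (i : ℕ) < k then (m i + μ ⟨i, h⟩) / 2 else m i + 1) < μ ⟨i, h⟩ := h1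
        _ = m (⟨(i:ℕ), h⟩ : Fin k).succ := (hmsucc _).symm
        _ ≤ m j := hm.monotone h2
  -- sign of g at test points
  have hgsign : ∀ i : Fin (k+1), 0 < (-1)^(k - (i:ℕ)) * ∏ j, (T i - m j) := by
    intro i
    have hunion : Finset.Iic i ∪ Finset.Ioi i = (Finset.univ : Finset (Fin (k+1))) := by
      ext x
      simp only [Finset.mem_union, Finset.mem_Iic, Finset.mem_Ioi, Finset.mem_univ, iff_true]
      exact le_or_gt x i
    have hdisj : Disjoint (Finset.Iic i) (Finset.Ioi i) := by
      rw [Finset.disjoint_left]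
      intro a ha ha'
      exact absurd (Finset.mem_Ioi.mp ha') (not_lt.mpr (Finset.mem_Iic.mp ha))
    have hsplit : ∏ j, (T i - m j) = (∏ j ∈ Finset.Iic i, (T i - m j)) *
        (∏ j ∈ Finset.Ioi i, (T i - m j)) := by
      rw [← Finset.prod_union hdisj, hunion]
    have h1 : 0 < ∏ j ∈ Finset.Iic i, (T i - m j) := by
      apply Finset.prod_pos
      intro j hj
      have h3 : m j ≤ m i := hm.monotone (Finset.mem_Iic.mp hj)
      have := hTa i; linarith
    have h2 : 0 < (-1)^((Finset.Ioi i).card) * ∏ j ∈ Finset.Ioi i, (T i - m j) := by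
      apply aux_signprod
      intro j hj
      have := hTb i j (Finset.mem_Ioi.mp hj); linarith
    have hcard : (Finset.Ioi i).card = k - (i:ℕ) := by
      rw [Fin.card_Ioi]; omega
    rw [hcard] at h2
    rw [hsplit]
    calc (0:ℝ) < (∏ j ∈ Finset.Iic i, (T i - m j)) *
        ((-1)^(k - (i:ℕ)) * ∏ j ∈ Finset.Ioi i, (T i - m j)) := mul_pos h1 h2
      _ = (-1)^(k-(i:ℕ)) * ((∏ j ∈ Finset.Iic i, (T i - m j)) *
          (∏ j ∈ Finset.Ioi i, (T i - m j))) := by ring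
  -- positivity of δ₀
  have hGne : ∀ i : Fin (k+1), (∏ j, (T i - m j)) ≠ 0 := by
    intro i h
    have := hgsign i
    rw [h, mul_zero] at this
    exact lt_irrefl _ this
  set δ₀ : ℝ := Finset.univ.inf' Finset.univ_nonempty
    (fun i : Fin (k+1) => |∏ j, (T i - m j)| / (|r.eval (T i)| + 1)) with hδ₀_def
  have hδ₀pos : 0 < δ₀ := by
    rw [hδ₀_def]
    apply (Finset.lt_inf'_iff _).mpr
    intro i _
    exact div_pos (abs_pos.mpr (hGne i)) (by positivity)
  refine ⟨δ₀, hδ₀pos, ?_⟩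
  intro δ hδ hδ'
  set p : ℝ[X] := X * ∏ j, (X - C (μ j)) - C δ * r with hp_def
  have hpeval : ∀ x : ℝ, p.eval x = x * (∏ j, (x - μ j)) - δ * r.eval x := by
    intro x
    simp [hp_def, eval_prod]
  have hxprod : ∀ x : ℝ, x * ∏ j, (x - μ j) = ∏ j : Fin (k+1), (x - m j) := by
    intro x
    rw [Fin.prod_univ_succ]
    simp only [hm0, hmsucc, sub_zero]
  -- sign of p at the T i
  have hsignT : ∀ i : Fin (k+1), 0 < (-1)^(k - (i:ℕ)) * p.eval (T i) := by
    intro i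
    have hs := hgsign i
    have hrb : δ * |r.eval (T i)| < |∏ j, (T i - m j)| := by
      have hle : δ₀ ≤ |∏ j, (T i - m j)| / (|r.eval (T i)| + 1) := by
        rw [hδ₀_def]; exact Finset.inf'_le _ (Finset.mem_univ i)
      have h2 : δ₀ * (|r.eval (T i)| + 1) ≤ |∏ j, (T i - m j)| :=
        (le_div_iff₀ (by positivity)).mp hle
      have h3 : δ * (|r.eval (T i)| + 1) < δ₀ * (|r.eval (T i)| + 1) :=
        mul_lt_mul_of_pos_right hδ' (by positivity)
      nlinarith [abs_nonneg (r.eval (T i))]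
    have habs : (-1:ℝ)^(k-(i:ℕ)) * ∏ j, (T i - m j) = |∏ j, (T i - m j)| := by
      have h1 : |(-1:ℝ)^(k-(i:ℕ)) * ∏ j, (T i - m j)| = |∏ j, (T i - m j)| := by
        rw [abs_mul, abs_pow, abs_neg, abs_one, one_pow, one_mul]
      rw [← h1, abs_of_pos hs]
    have hb : (-1:ℝ)^(k-(i:ℕ)) * (δ * r.eval (T i)) ≤ δ * |r.eval (T i)| := by
      have hb2 := le_abs_self ((-1:ℝ)^(k-(i:ℕ)) * (δ * r.eval (T i)))
      rw [abs_mul, abs_pow, abs_neg, abs_one, one_pow, one_mul, abs_mul, abs_of_pos hδ] at hb2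
      exact hb2
    have hkey : (-1:ℝ)^(k-(i:ℕ)) * p.eval (T i)
        = (-1:ℝ)^(k-(i:ℕ)) * (∏ j, (T i - m j)) - (-1:ℝ)^(k-(i:ℕ)) * (δ * r.eval (T i)) := by
      rw [hpeval, hxprod]; ring
    rw [hkey, habs]
    linarith
  have hsign0 : 0 < (-1:ℝ)^(k+1) * p.eval 0 := by
    have h1 : p.eval 0 = -(δ * r.eval 0) := by rw [hpeval]; ring
    rw [h1, pow_succ]
    have h2 := mul_pos hδ hr0
    nlinarith
  -- the points P
  have hT0 : ∀ i, 0 < T i := by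
    intro i
    have h1 : m 0 ≤ m i := hm.monotone (Fin.zero_le i)
    have h2 := hTa i
    rw [hm0] at h1; linarith
  have hTmono : StrictMono T := by
    intro i j hij
    exact lt_trans (hTb i j hij) (hTa j)
  set P : Fin (k+2) → ℝ := Fin.cons 0 T with hP_def
  have hP : StrictMono P := aux_strictMono_cons 0 T hT0 hTmono
  have hP0 : P 0 = 0 := rfl
  have hPsucc : ∀ i : Fin (k+1), P i.succ = T i := fun i => by rw [hP_def, Fin.cons_succ]
  have hPsign : ∀ j : Fin (k+2), 0 < (-1:ℝ)^(k+1-(j:ℕ)) * p.eval (P j) := by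
    intro j
    induction j using Fin.cases with
    | zero => rw [hP0]; simpa using hsign0
    | succ i =>
      rw [hPsucc]
      have he : k+1-((i.succ:ℕ)) = k - (i:ℕ) := by
        have := i.isLt; simp only [Fin.val_succ]; omega
      rw [he]
      exact hsignT i
  -- roots by IVT
  have hroot : ∀ i : Fin (k+1), ∃ x, x ∈ Set.Ioo (P i.castSucc) (P i.succ) ∧ p.eval x = 0 := by
    intro i
    have hlt : P i.castSucc < P i.succ := hP (Fin.castSucc_lt_succ (i := i))
    apply aux_root_of_sign p _ _ hlt
    have h1 := hPsign i.castSucc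
    have h2 := hPsign i.succ
    have e1 : k+1-((i.castSucc:ℕ)) = (k - (i:ℕ)) + 1 := by
      have := i.isLt; simp only [Fin.coe_castSucc]; omega
    have e2 : k+1-((i.succ:ℕ)) = k - (i:ℕ) := by
      have := i.isLt; simp only [Fin.val_succ]; omega
    rw [e1, pow_succ] at h1
    rw [e2] at h2
    set s : ℝ := (-1:ℝ)^(k-(i:ℕ)) with hs_def
    have hss : s * s = 1 := by
      rw [hs_def, ← mul_pow]; norm_num
    have hmain : p.eval (P i.castSucc) * p.eval (P i.succ)
        = -((s * (-1) * p.eval (P i.castSucc)) * (s * p.eval (P i.succ))) := by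
      linear_combination (-(p.eval (P i.castSucc) * p.eval (P i.succ))) * hss
    rw [hmain]
    have := mul_pos h1 h2
    linarith
  choose ν hν1 hν2 using hroot
  refine ⟨ν, ?_, ?_, hν2⟩
  · intro i j hij
    calc ν i < P i.succ := (hν1 i).2
      _ ≤ P j.castSucc := hP.monotone (Fin.succ_le_castSucc_iff.mpr hij)
      _ < ν j := (hν1 j).1
  · intro i
    have h1 : P 0 ≤ P i.castSucc := hP.monotone (Fin.zero_le _)
    have h2 := (hν1 i).1
    rw [hP0] at h1
    linarith

lemma aux_charpoly_identity (m : ℕ) (A : Matrix (Fin (m+2)) (Fin (m+2)) ℝ)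
    (ε' : Fin (m+1) → ℝ) :
    ∃ r : ℝ[X], ∀ δ : ℝ, (Matrix.diagonal (Fin.snoc ε' δ) * A).charpoly
      = X * (Matrix.diagonal ε' * (A.submatrix Fin.castSucc Fin.castSucc)).charpoly
        - C δ * r := by
  classical
  set l : Fin (m+2) := Fin.last (m+1) with hl_def
  set B := A.submatrix (Fin.castSucc : Fin (m+1) → Fin (m+2)) Fin.castSucc with hB_def
  set M0 := Matrix.diagonal (Fin.snoc ε' (0:ℝ)) * A with hM0_def
  set K0 := charmatrix M0 with hK0_def
  have hK0row : ∀ j, K0 l j = if l = j then (X : ℝ[X]) else 0 := by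
    intro j
    have hM0l : M0 l j = 0 := by
      rw [hM0_def, Matrix.diagonal_mul, hl_def, Fin.snoc_last, zero_mul]
    by_cases h : l = j
    · subst h; rw [hK0_def, charmatrix_apply_eq, hM0l, map_zero, sub_zero, if_pos rfl]
    · rw [hK0_def, charmatrix_apply_ne _ _ _ h, hM0l, map_zero, neg_zero, if_neg h]
  refine ⟨(K0.updateRow l (fun j => C (A l j))).det, ?_⟩
  intro δ
  have hchar : charmatrix (Matrix.diagonal (Fin.snoc ε' δ) * A)
      = K0.updateRow l ((K0 l) + (-C δ) • (fun j => C (A l j))) := by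
    apply Matrix.ext
    intro i j
    by_cases hi : i = l
    · subst hi
      rw [Matrix.updateRow_self]
      have hMδ : (Matrix.diagonal (Fin.snoc ε' δ) * A) l j = δ * A l j := by
        rw [Matrix.diagonal_mul, hl_def, Fin.snoc_last]
      by_cases h : l = j
      · subst h
        rw [charmatrix_apply_eq, hMδ]
        simp only [Pi.add_apply, Pi.smul_apply, hK0row, if_pos rfl, smul_eq_mul, _root_.map_mul]
        simp only [if_true]
        ring
      · rw [charmatrix_apply_ne _ _ _ h, hMδ]
        simp only [Pi.add_apply, Pi.smul_apply, hK0row, if_neg h, smul_eq_mul, _root_.map_mul]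
        ring
    · rw [Matrix.updateRow_ne hi]
      have hi2 : i ≠ Fin.last (m+1) := by rwa [hl_def] at hi
      obtain ⟨i', rfl⟩ := Fin.exists_castSucc_eq.mpr hi2
      have hM : (Matrix.diagonal (Fin.snoc ε' δ) * A) i'.castSucc j
          = M0 i'.castSucc j := by
        rw [hM0_def, Matrix.diagonal_mul, Matrix.diagonal_mul, Fin.snoc_castSucc,
          Fin.snoc_castSucc]
      by_cases h : i'.castSucc = j
      · subst h; rw [charmatrix_apply_eq, hK0_def, charmatrix_apply_eq, hM]
      · rw [charmatrix_apply_ne _ _ _ h, hK0_def, charmatrix_apply_ne _ _ _ h, hM]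
  have hdetK0 : K0.det = X * (Matrix.diagonal ε' * B).charpoly := by
    rw [Matrix.det_succ_row K0 l]
    rw [Finset.sum_eq_single l]
    · have h1 : K0 l l = X := by rw [hK0row, if_pos rfl]
      have h2 : K0.submatrix l.succAbove l.succAbove = charmatrix (Matrix.diagonal ε' * B) := by
        have h3 : l.succAbove = Fin.castSucc := by rw [hl_def]; exact Fin.succAbove_last
        rw [h3, hK0_def, aux_charmatrix_submatrix _ _ (Fin.castSucc_injective _)]
        have h5 : M0.submatrix (Fin.castSucc : Fin (m+1) → Fin (m+2)) Fin.castSucc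
            = Matrix.diagonal ε' * B := by
          ext i j
          rw [Matrix.submatrix_apply, hM0_def, Matrix.diagonal_mul, Matrix.diagonal_mul,
            Fin.snoc_castSucc, hB_def, Matrix.submatrix_apply]
        rw [h5]
      rw [h1, h2]
      have h4 : (-1 : ℝ[X])^((l:ℕ) + (l:ℕ)) = 1 := Even.neg_one_pow ⟨(l:ℕ), rfl⟩
      rw [h4, Matrix.charpoly, one_mul]
    · intro j _ hj
      have : K0 l j = 0 := by rw [hK0row, if_neg (fun h => hj h.symm)]
      rw [this, mul_zero, zero_mul]
    · intro h; exact absurd (Finset.mem_univ l) h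
  rw [Matrix.charpoly, hchar, Matrix.det_updateRow_add, Matrix.det_updateRow_smul,
    Matrix.updateRow_eq_self, hdetK0, Matrix.charpoly]
  ring

lemma aux_main (m : ℕ) : ∀ (A : Matrix (Fin (m+1)) (Fin (m+1)) ℝ),
    (∀ k : ℕ, (hk : k ≤ m+1) → 1 ≤ k →
      0 < (A.submatrix (Fin.castLE hk) (Fin.castLE hk)).det) →
    ∃ ε : Fin (m+1) → ℝ, ε 0 = 1 ∧ StrictAnti ε ∧ (∀ i, 0 < ε i) ∧
      ∃ μ : Fin (m+1) → ℝ, StrictMono μ ∧ (∀ i, 0 < μ i) ∧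
        (Matrix.diagonal ε * A).charpoly = ∏ i, (X - C (μ i)) := by
  induction m with
  | zero =>
    intro A hA
    have hA00 : 0 < A 0 0 := by
      have h := hA 1 le_rfl le_rfl
      rwa [Matrix.det_fin_one, Matrix.submatrix_apply] at h
    refine ⟨fun _ => 1, rfl, ?_, fun _ => one_pos, fun _ => A 0 0, ?_, fun _ => hA00, ?_⟩
    · intro i j hij
      simp only [Fin.lt_iff_val_lt_val] at hij
      omega
    · intro i j hij
      simp only [Fin.lt_iff_val_lt_val] at hij
      omega
    · have h1 : (Matrix.diagonal (fun _ : Fin 1 => (1:ℝ))) = 1 := Matrix.diagonal_one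
      rw [h1, one_mul, Matrix.charpoly, Matrix.det_fin_one, charmatrix_apply_eq,
        Fin.prod_univ_one]
  | succ m IH =>
    intro A hA
    set B := A.submatrix (Fin.castSucc : Fin (m+1) → Fin (m+2)) Fin.castSucc with hB_def
    have hB : ∀ k : ℕ, (hk : k ≤ m+1) → 1 ≤ k →
        0 < (B.submatrix (Fin.castLE hk) (Fin.castLE hk)).det := by
      intro k hk h1k
      have hk2 : k ≤ m + 2 := le_trans hk (by omega)
      have heq : B.submatrix (Fin.castLE hk) (Fin.castLE hk)
          = A.submatrix (Fin.castLE hk2) (Fin.castLE hk2) := by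
        rw [hB_def, Matrix.submatrix_submatrix]
        congr 1 <;> · funext i; exact Fin.ext rfl
      rw [heq]
      exact hA k hk2 h1k
    obtain ⟨ε', hε'0, hε'anti, hε'pos, μ, hμmono, hμpos, hμchar⟩ := IH B hB
    obtain ⟨r, hr⟩ := aux_charpoly_identity m A ε'
    have hdetA : 0 < A.det := by
      have h := hA (m+2) le_rfl (by omega)
      have heq : A.submatrix (Fin.castLE (le_refl (m+2))) (Fin.castLE (le_refl (m+2))) = A := by
        have : (Fin.castLE (le_refl (m+2)) : Fin (m+2) → Fin (m+2)) = id := by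
          funext i; exact Fin.ext rfl
        rw [this, Matrix.submatrix_id_id]
      rwa [heq] at h
    have hprodε' : 0 < ∏ i, ε' i := Finset.prod_pos (fun i _ => hε'pos i)
    -- the sign of r.eval 0
    have hr0 : 0 < (-1:ℝ)^(m+1) * r.eval 0 := by
      have h1 := hr 1
      set c : ℝ := (∏ i, ε' i) * A.det with hc_def
      have hcpos : 0 < c := mul_pos hprodε' hdetA
      have h2 : (Matrix.diagonal (Fin.snoc ε' (1:ℝ)) * A).charpoly.eval 0
          = (-1:ℝ)^(m+2) * c := by
        have h3 : ((Matrix.diagonal (Fin.snoc ε' (1:ℝ)) * A)).det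
            = (-1:ℝ)^(Fintype.card (Fin (m+2)))
              * (Matrix.diagonal (Fin.snoc ε' (1:ℝ)) * A).charpoly.coeff 0 :=
          Matrix.det_eq_sign_charpoly_coeff _
        rw [Fintype.card_fin] at h3
        have h4 : ((Matrix.diagonal (Fin.snoc ε' (1:ℝ)) * A)).det = c := by
          rw [Matrix.det_mul, Matrix.det_diagonal, Fin.prod_snoc, mul_one, hc_def]
        rw [coeff_zero_eq_eval_zero] at h3
        have h5 : ((-1:ℝ)^(m+2)) * ((-1:ℝ)^(m+2)) = 1 := by
          rw [← mul_pow]; norm_num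
        linear_combination (-((-1:ℝ)^(m+2))) * h3 + ((-1:ℝ)^(m+2)) * h4
          + (-((Matrix.diagonal (Fin.snoc ε' (1:ℝ)) * A).charpoly.eval 0)) * h5
      rw [h1] at h2
      simp only [eval_sub, eval_mul, eval_X, eval_C, zero_mul, C_1, one_mul, zero_sub] at h2
      have h6 : r.eval 0 = -((-1:ℝ)^(m+2) * c) := by linarith
      have hm1 : ((-1:ℝ)^m) * ((-1:ℝ)^m) = 1 := by
        rw [← mul_pow]; norm_num
      have e2 : (-1:ℝ)^(m+2) = (-1:ℝ)^m := by rw [pow_add]; norm_num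
      have e1 : (-1:ℝ)^(m+1) = -(-1:ℝ)^m := by rw [pow_succ]; ring
      have hfin : (-1:ℝ)^(m+1) * r.eval 0 = c := by
        rw [h6, e2, e1]
        linear_combination c * hm1
      rw [hfin]
      exact hcpos
    -- apply the key lemma
    obtain ⟨δ₀, hδ₀pos, hkey⟩ := aux_key (m+1) μ hμmono hμpos r hr0
    set δ : ℝ := min (δ₀/2) (ε' (Fin.last m) / 2) with hδ_def
    have hδpos : 0 < δ := lt_min (by linarith) (by have := hε'pos (Fin.last m); linarith)
    have hδlt : δ < δ₀ := lt_of_le_of_lt (min_le_left _ _) (by linarith)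
    have hδε' : ∀ i, δ < ε' i := by
      intro i
      have h1 : δ ≤ ε' (Fin.last m) / 2 := min_le_right _ _
      have h2 : ε' (Fin.last m) ≤ ε' i := hε'anti.antitone (Fin.le_last i)
      have := hε'pos (Fin.last m)
      linarith
    obtain ⟨ν, hνmono, hνpos, hνroot⟩ := hkey δ hδpos hδlt
    -- assemble ε
    refine ⟨Fin.snoc ε' δ, ?_, aux_strictAnti_snoc δ ε' hε'anti hδε', ?_, ν, hνmono, hνpos, ?_⟩
    · have : (0 : Fin (m+2)) = Fin.castSucc 0 := rfl
      rw [this, Fin.snoc_castSucc, hε'0]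
    · intro i
      induction i using Fin.lastCases with
      | last => rw [Fin.snoc_last]; exact hδpos
      | cast i' => rw [Fin.snoc_castSucc]; exact hε'pos i'
    -- charpoly = ∏ (X - C (ν i))
    · set p := (Matrix.diagonal (Fin.snoc ε' δ) * A).charpoly with hp_def
      have hpform : p = X * ∏ j, (X - C (μ j)) - C δ * r := by
        rw [hp_def, hr δ, hμchar]
      have hpmonic : p.Monic := Matrix.charpoly_monic _
      have hpdeg : p.natDegree = m + 2 := by
        rw [hp_def, Matrix.charpoly_natDegree_eq_dim, Fintype.card_fin]
      set s : ℝ[X] := ∏ i, (X - C (ν i)) with hs_def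
      have hsmonic : s.Monic :=
        monic_prod_of_monic _ _ (fun i _ => monic_X_sub_C (ν i))
      have hsdeg : s.natDegree = m + 2 := by
        rw [hs_def, natDegree_prod_of_monic _ _ (fun i _ => monic_X_sub_C (ν i))]
        simp [natDegree_X_sub_C]
      have hseval : ∀ i, s.eval (ν i) = 0 := by
        intro i
        rw [hs_def, eval_prod]
        apply Finset.prod_eq_zero (Finset.mem_univ i)
        simp
      by_contra hne
      have hsub : p - s ≠ 0 := sub_ne_zero.mpr hne
      have hpne : p ≠ 0 := hpmonic.ne_zero
      have hsne : s ≠ 0 := hsmonic.ne_zero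
      have hdeg_eq : p.degree = s.degree := by
        rw [Polynomial.degree_eq_natDegree hpne, Polynomial.degree_eq_natDegree hsne,
          hpdeg, hsdeg]
      have hdlt : (p - s).natDegree < m + 2 := by
        rw [Polynomial.natDegree_lt_iff_degree_lt hsub]
        have h1 := Polynomial.degree_sub_lt hdeg_eq hpne
          (by rw [hpmonic.leadingCoeff, hsmonic.leadingCoeff])
        rw [Polynomial.degree_eq_natDegree hpne, hpdeg] at h1
        exact_mod_cast h1
      have hzero : p - s = 0 := by
        apply Polynomial.eq_zero_of_natDegree_lt_card_of_eval_eq_zero (p - s) hνmono.injective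
        · intro i
          rw [eval_sub, hseval i, sub_zero, hpform]
          exact hνroot i
        · rwa [Fintype.card_fin]
      exact hsub hzero

/-- A matrix with positive leading principal minors admits a stabilization
matrix of the form `D = diag (ε₁, …, εₙ)` with `1 = ε₁ > ε₂ > … > εₙ > 0`:
all eigenvalues of `D * A` are real, positive and simple. -/
theorem stabilization_decreasing_diagonal {n : ℕ} (hn : 0 < n)
    (A : Matrix (Fin n) (Fin n) ℝ)
    (hA : ∀ k : ℕ, (hk : k ≤ n) → 1 ≤ k →
      0 < (A.submatrix (Fin.castLE hk) (Fin.castLE hk)).det) :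
    ∃ ε : Fin n → ℝ, ε ⟨0, hn⟩ = 1 ∧ StrictAnti ε ∧ (∀ i, 0 < ε i) ∧
      ∃ μ : Fin n → ℝ, Function.Injective μ ∧ (∀ i, 0 < μ i) ∧
        (Matrix.diagonal ε * A).charpoly = ∏ i, (X - C (μ i)) := by
  cases n with
  | zero => omega
  | succ m =>
    obtain ⟨ε, hε0, hεanti, hεpos, μ, hμmono, hμpos, hμchar⟩ := aux_main m A hA
    exact ⟨ε, hε0, hεanti, hεpos, μ, hμmono.injective, hμpos, hμchar⟩
end

section
/- (Sylvester's determinant identity, special case) Let A be an n×n matrix with invertible leading principal k×k block A_{kk}. Define the (n−k)×(n−k) matrix B by b_{lr} = det A[(1,…,k,l),(1,…,k,r)] for l, r > k, where A[(i's),(j's)] denotes the submatrix with the indicated rows and columns. Then for any p-element index sets (l₁<…<l_p) and (r₁<…<r_p) from {k+1,…,n}: det B[(l's),(r's)] = (det A_{kk})^{p−1} · det A[(1,…,k,l₁,…,l_p),(1,…,k,r₁,…,r_p)]. -/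
open Matrix BigOperators

variable {F : Type*} [Field F]

/-- The minor of an `n × n` matrix `A` with rows `1, …, k, l₁, …, lₚ` and
columns `1, …, k, r₁, …, rₚ` (indices beyond `k` given by `l, r`). -/
noncomputable def borderedMinor {n k p : ℕ} (hk : k ≤ n)
    (A : Matrix (Fin n) (Fin n) F) (l r : Fin p → Fin n) : F :=
  (A.submatrix (Sum.elim (Fin.castLE hk) l) (Sum.elim (Fin.castLE hk) r) :
    Matrix (Fin k ⊕ Fin p) (Fin k ⊕ Fin p) F).det

/-- (Sylvester's determinant identity) Let `A` be an `n × n` matrix whose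
leading principal `k × k` block has nonzero determinant, and let `B` be the
matrix of bordered minors `b_{l r} = det A[(1,…,k,l),(1,…,k,r)]` for `l, r > k`.
Then every `p × p` minor of `B` with row indices `l₁ < … < lₚ` and column
indices `r₁ < … < rₚ` (all `> k`) equals
`(det A_{kk})^(p-1) · det A[(1,…,k,l₁,…,lₚ),(1,…,k,r₁,…,rₚ)]`. -/
theorem sylvester_determinant_identity {n k : ℕ} (hk : k ≤ n)
    (A : Matrix (Fin n) (Fin n) F)
    (hAkk : (A.submatrix (Fin.castLE hk) (Fin.castLE hk)).det ≠ 0)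
    (B : Matrix {i : Fin n // k ≤ (i : ℕ)} {i : Fin n // k ≤ (i : ℕ)} F)
    (hB : ∀ l r : {i : Fin n // k ≤ (i : ℕ)},
      B l r = borderedMinor hk A (fun _ : Fin 1 => (l : Fin n)) (fun _ => (r : Fin n)))
    (p : ℕ) (hp : 0 < p)
    (l r : Fin p → {i : Fin n // k ≤ (i : ℕ)})
    (hl : StrictMono l) (hr : StrictMono r) :
    (B.submatrix l r).det =
      (A.submatrix (Fin.castLE hk) (Fin.castLE hk)).det ^ (p - 1) *
        borderedMinor hk A (fun i => (l i : Fin n)) (fun i => (r i : Fin n)) := by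
  set D := A.submatrix (Fin.castLE hk) (Fin.castLE hk) with hD
  haveI : Invertible D := D.invertibleOfIsUnitDet (isUnit_iff_ne_zero.mpr hAkk)
  set S : Matrix (Fin n) (Fin n) F := fun i j =>
      A i j - ∑ b, (∑ a, A i (Fin.castLE hk a) * D⁻¹ a b) * A (Fin.castLE hk b) j with hS
  have key : ∀ (q : ℕ) (l r : Fin q → Fin n),
      borderedMinor hk A l r = D.det * (S.submatrix l r).det := by
    intro q l r
    have hblocks : (A.submatrix (Sum.elim (Fin.castLE hk) l) (Sum.elim (Fin.castLE hk) r) :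
        Matrix (Fin k ⊕ Fin q) (Fin k ⊕ Fin q) F) =
        fromBlocks D (A.submatrix (Fin.castLE hk) r) (A.submatrix l (Fin.castLE hk))
          (A.submatrix l r) := by
      ext i j
      rcases i with i | i <;> rcases j with j | j <;> rfl
    rw [borderedMinor, hblocks, det_fromBlocks₁₁]
    congr 1
    congr 1
    ext i j
    simp [hS, Matrix.mul_apply, Matrix.sub_apply, Matrix.submatrix_apply]
    rfl
  have hB' : ∀ l r : {i : Fin n // k ≤ (i : ℕ)},
      B l r = D.det * S (l : Fin n) (r : Fin n) := by
    intro l r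
    rw [hB, key 1 (fun _ => (l : Fin n)) (fun _ => (r : Fin n))]
    congr 1
    rw [Matrix.det_fin_one]
    rfl
  have hBS : B.submatrix l r =
      D.det • (S.submatrix (fun i => (l i : Fin n)) (fun i => (r i : Fin n))) := by
    ext i j
    simp [hB', smul_eq_mul]
  rw [hBS, Matrix.det_smul, key p, Fintype.card_fin, ← mul_assoc, ← pow_succ,
    Nat.sub_add_cancel hp]
end
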